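/- Let Y be a 𝒫_λ-space. Then for every Banach space X, every compact linear operator T : X → Y is the limit in operator norm of a sequence of finite-rank bounded linear operators from X to Y. -/

import Mathlib

open Filter

universe u v w

/-- A Banach space `Y` is a `𝒫_λ`-space if for all Banach spaces `W ⊆ Z` (via a linear isometric
embedding) every bounded operator `W → Y` extends to `Z` with norm at most `λ` times bigger. -/
def IsPLambdaSpace (𝕜 : Type*) [RCLike 𝕜] (Y : Type*) [NormedAddCommGroup Y]
    [NormedSpace 𝕜 Y] (lam : ℝ) : Prop :=
  ∀ (W : Type u) (Z : Type v) [NormedAddCommGroup W] [NormedSpace 𝕜 W] [CompleteSpace W]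
    [NormedAddCommGroup Z] [NormedSpace 𝕜 Z] [CompleteSpace Z]
    (i : W →ₗᵢ[𝕜] Z) (T : W →L[𝕜] Y),
    ∃ Ttilde : Z →L[𝕜] Y, (∀ w : W, Ttilde (i w) = T w) ∧ ‖Ttilde‖ ≤ lam * ‖T‖

open Metric Set TopologicalSpace BoundedContinuousFunction

section Aux

variable {𝕜 : Type*} [RCLike 𝕜]

/-- Finite-rank approximation of the identity on totally bounded subsets of `ℕ →ᵇ 𝕜`. -/
theorem bcf_finrank_approx {K' : Set (ℕ →ᵇ 𝕜)} (hK' : TotallyBounded K') {ε : ℝ} (hε : 0 < ε) :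
    ∃ P : (ℕ →ᵇ 𝕜) →L[𝕜] (ℕ →ᵇ 𝕜), FiniteDimensional 𝕜 (LinearMap.range (P : (ℕ →ᵇ 𝕜) →ₗ[𝕜] (ℕ →ᵇ 𝕜))) ∧
      ∀ z ∈ K', ‖P z - z‖ ≤ 3 * ε := by
  classical
  obtain ⟨t, htK, htfin, htcov⟩ := finite_approx_of_totallyBounded hK' ε hε
  haveI : Fintype t := htfin.fintype
  set g : ℕ → (t → 𝕜) := fun n j => (j : ℕ →ᵇ 𝕜) n with hg
  have hgb : TotallyBounded (Set.range g) := by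
    set C : NNReal := Finset.univ.sup fun j : t => ‖(j : ℕ →ᵇ 𝕜)‖₊ with hC
    have hsub : Set.range g ⊆ Metric.closedBall 0 (C : ℝ) := by
      rintro _ ⟨n, rfl⟩
      rw [mem_closedBall_zero_iff]
      refine (pi_norm_le_iff_of_nonneg C.coe_nonneg).2 fun j => ?_
      refine le_trans ((j : ℕ →ᵇ 𝕜).norm_coe_le_norm n) ?_
      have hj := Finset.le_sup (f := fun j : t => ‖(j : ℕ →ᵇ 𝕜)‖₊) (Finset.mem_univ j)
      exact_mod_cast hj
    exact TotallyBounded.subset hsub (isCompact_closedBall _ _).totallyBounded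
  obtain ⟨t₂, ht₂sub, ht₂fin, ht₂cov⟩ := finite_approx_of_totallyBounded hgb ε hε
  haveI : Fintype t₂ := ht₂fin.fintype
  choose φ hφ using fun y : t₂ => ht₂sub y.2
  have h3 : ∀ n : ℕ, ∃ y : t₂, dist (g n) (g (φ y)) < ε := by
    intro n
    have h := ht₂cov (Set.mem_range_self n)
    rw [Set.mem_iUnion₂] at h
    obtain ⟨y, hy, hyd⟩ := h
    exact ⟨⟨y, hy⟩, by rw [hφ ⟨y, hy⟩]; exact mem_ball.1 hyd⟩
  choose ψ hψ using h3
  let A : (ℕ →ᵇ 𝕜) →ₗ[𝕜] (t₂ → 𝕜) :=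
    { toFun := fun z y => z (φ y)
      map_add' := fun a b => by ext y; simp
      map_smul' := fun c a => by ext y; simp }
  let B : (t₂ → 𝕜) →ₗ[𝕜] (ℕ →ᵇ 𝕜) :=
    { toFun := fun v =>
        ofNormedAddCommGroupDiscrete (fun n => v (ψ n)) ‖v‖ (fun n => norm_le_pi_norm v (ψ n))
      map_add' := fun a b => by ext n; simp
      map_smul' := fun c a => by ext n; simp }
  let Ac : (ℕ →ᵇ 𝕜) →L[𝕜] (t₂ → 𝕜) := A.mkContinuous 1 (fun z => by
    rw [one_mul]
    exact (pi_norm_le_iff_of_nonneg (norm_nonneg z)).2 fun y => z.norm_coe_le_norm _)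
  let Bc : (t₂ → 𝕜) →L[𝕜] (ℕ →ᵇ 𝕜) := B.mkContinuous 1 (fun v => by
    rw [one_mul]
    exact (norm_le (norm_nonneg v)).2 fun n => norm_le_pi_norm v (ψ n))
  refine ⟨Bc.comp Ac, ?_, ?_⟩
  · have hle : LinearMap.range ((Bc.comp Ac : (ℕ →ᵇ 𝕜) →L[𝕜] (ℕ →ᵇ 𝕜)) : (ℕ →ᵇ 𝕜) →ₗ[𝕜] (ℕ →ᵇ 𝕜)) ≤ LinearMap.range B := by
      rintro _ ⟨z, rfl⟩
      exact ⟨Ac z, rfl⟩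
    exact Submodule.finiteDimensional_of_le hle
  · intro z hz
    have h := htcov hz
    rw [Set.mem_iUnion₂] at h
    obtain ⟨wv, hw, hzw⟩ := h
    rw [mem_ball] at hzw
    refine (norm_le (by positivity)).2 fun n => ?_
    have hval : ((Bc.comp Ac) z - z) n = z (φ (ψ n)) - z n := rfl
    rw [hval, ← dist_eq_norm]
    have h1 : dist (z (φ (ψ n))) (wv (φ (ψ n))) < ε :=
      lt_of_le_of_lt (dist_coe_le_dist _) hzw
    have h2 : dist (wv (φ (ψ n))) (wv n) < ε := by
      have hj : ∀ m : ℕ, wv m = g m ⟨wv, hw⟩ := fun m => rfl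
      rw [hj, hj]
      calc dist (g (φ (ψ n)) ⟨wv, hw⟩) (g n ⟨wv, hw⟩)
          ≤ dist (g (φ (ψ n))) (g n) := dist_le_pi_dist _ _ _
        _ < ε := by rw [dist_comm]; exact hψ n
    have h3' : dist (wv n) (z n) < ε := by
      rw [dist_comm]
      exact lt_of_le_of_lt (dist_coe_le_dist _) hzw
    calc dist (z (φ (ψ n))) (z n)
        ≤ dist (z (φ (ψ n))) (wv (φ (ψ n))) + dist (wv (φ (ψ n))) (wv n) + dist (wv n) (z n) :=
          dist_triangle4 _ _ _ _
      _ ≤ 3 * ε := by linarith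

/-- A nonempty separable normed space embeds linearly isometrically in `ℕ →ᵇ 𝕜`. -/
theorem exists_bcf_embedding (𝕜 : Type*) [RCLike 𝕜] (E : Type*) [NormedAddCommGroup E]
    [NormedSpace 𝕜 E] [SeparableSpace E] [Nonempty E] :
    Nonempty (E →ₗᵢ[𝕜] (ℕ →ᵇ 𝕜)) := by
  obtain ⟨u, hu⟩ := TopologicalSpace.exists_dense_seq E
  choose f hf1 hf2 using fun n => exists_dual_vector'' 𝕜 (u n)
  have hfb : ∀ (n : ℕ) (y : E), ‖f n y‖ ≤ ‖y‖ := by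
    intro n y
    calc ‖f n y‖ ≤ ‖f n‖ * ‖y‖ := (f n).le_opNorm y
      _ ≤ 1 * ‖y‖ := mul_le_mul_of_nonneg_right (hf1 n) (norm_nonneg y)
      _ = ‖y‖ := one_mul _
  let L : E →ₗ[𝕜] (ℕ →ᵇ 𝕜) :=
    { toFun := fun y => ofNormedAddCommGroupDiscrete (fun n => f n y) ‖y‖ (fun n => hfb n y)
      map_add' := fun a b => by ext n; simp
      map_smul' := fun c a => by ext n; simp }
  have hnorm : ∀ y : E, ‖L y‖ = ‖y‖ := by
    intro y
    refine le_antisymm ((norm_le (norm_nonneg y)).2 fun n => hfb n y) ?_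
    refine le_of_forall_pos_le_add fun ε hε => ?_
    obtain ⟨n, hn⟩ := hu.exists_dist_lt y (half_pos hε)
    have h1 : ‖f n y‖ ≤ ‖L y‖ := (L y).norm_coe_le_norm n
    have h2 : ‖f n (u n)‖ = ‖u n‖ := by
      rw [hf2 n, RCLike.norm_ofReal, abs_norm]
    have h3 : ‖f n (u n) - f n y‖ ≤ ‖u n - y‖ := by
      rw [← map_sub]; exact hfb n _
    have h4 : ‖u n - y‖ < ε / 2 := by
      rw [← dist_eq_norm, dist_comm]; exact hn
    have h5 : ‖y‖ ≤ ‖u n‖ + ε / 2 := by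
      calc ‖y‖ = ‖u n + (y - u n)‖ := by congr 1; abel
        _ ≤ ‖u n‖ + ‖y - u n‖ := norm_add_le _ _
        _ ≤ ‖u n‖ + ε / 2 := by
            rw [← dist_eq_norm]
            exact add_le_add (le_refl _) hn.le
    have h6 : ‖f n (u n)‖ ≤ ‖f n y‖ + ‖u n - y‖ := by
      calc ‖f n (u n)‖ = ‖f n y + (f n (u n) - f n y)‖ := by congr 1; abel
        _ ≤ ‖f n y‖ + ‖f n (u n) - f n y‖ := norm_add_le _ _
        _ ≤ ‖f n y‖ + ‖u n - y‖ := add_le_add (le_refl _) h3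
    have h7 := h2 ▸ h6
    linarith
  exact ⟨⟨L, hnorm⟩⟩

end Aux

/-- Every `𝒫_λ`-space has the approximation property: every compact operator from a Banach
space `X` into a `𝒫_λ`-space `Y` is an operator-norm limit of finite-rank operators. -/
theorem PLambda_approximation_property {𝕜 Y : Type*} [RCLike 𝕜]
    [NormedAddCommGroup Y] [NormedSpace 𝕜 Y] [CompleteSpace Y]
    (lam : ℝ) (hlam : 1 ≤ lam) (hY : IsPLambdaSpace.{u, v} 𝕜 Y lam)
    (X : Type w) [NormedAddCommGroup X] [NormedSpace 𝕜 X] [CompleteSpace X]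
    (T : X →L[𝕜] Y) (hT : IsCompactOperator T) :
    ∃ F : ℕ → X →L[𝕜] Y,
      (∀ n, FiniteDimensional 𝕜 (LinearMap.range (F n : X →ₗ[𝕜] Y))) ∧
      Tendsto F atTop (nhds T) := by
  classical
  have hlam0 : (0 : ℝ) ≤ lam := zero_le_one.trans hlam
  have hTl : IsCompactOperator (T : X →ₗ[𝕜] Y) := hT
  have hK : IsCompact (closure (T '' Metric.closedBall 0 1)) :=
    hTl.isCompact_closure_image_closedBall 1
  set Y₀ : Submodule 𝕜 Y :=
    (Submodule.span 𝕜 (T '' Metric.closedBall 0 1)).topologicalClosure with hY₀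
  have hmem : ∀ x : X, T x ∈ Y₀ := by
    intro x
    set c : 𝕜 := ((max 1 ‖x‖ : ℝ) : 𝕜) with hc
    have hmaxpos : (0 : ℝ) < max 1 ‖x‖ := lt_of_lt_of_le one_pos (le_max_left _ _)
    have hc0 : c ≠ 0 := by
      simp only [hc, ne_eq, RCLike.ofReal_eq_zero]
      exact ne_of_gt hmaxpos
    have hc1 : ‖c⁻¹ • x‖ ≤ 1 := by
      rw [norm_smul, norm_inv, RCLike.norm_ofReal, abs_of_pos hmaxpos]
      rw [inv_mul_le_iff₀ hmaxpos, mul_one]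
      exact le_max_right _ _
    have hmem1 : T (c⁻¹ • x) ∈ Y₀ := by
      refine Submodule.le_topologicalClosure _ (Submodule.subset_span ?_)
      exact ⟨c⁻¹ • x, by simpa [Metric.mem_closedBall, dist_zero_right] using hc1, rfl⟩
    have h2 : c • T (c⁻¹ • x) = T x := by
      rw [map_smul, smul_smul, mul_inv_cancel₀ hc0, one_smul]
    exact h2 ▸ Y₀.smul_mem c hmem1
  haveI : CompleteSpace ↥Y₀ :=
    (Submodule.isClosed_topologicalClosure _).completeSpace_coe
  have hsep : IsSeparable (Y₀ : Set Y) := by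
    have h1 : IsSeparable (T '' Metric.closedBall 0 1) := hK.isSeparable.mono subset_closure
    have h2 := (h1.span (R := 𝕜)).closure
    rwa [hY₀, Submodule.topologicalClosure_coe]
  haveI : SeparableSpace ↥Y₀ := hsep.separableSpace
  haveI : Nonempty ↥Y₀ := ⟨0⟩
  obtain ⟨LL⟩ : Nonempty (↥Y₀ →ₗᵢ[𝕜] (ℕ →ᵇ 𝕜)) := exists_bcf_embedding 𝕜 ↥Y₀
  -- smallness
  have hinj𝕜 : Function.Injective (fun z : 𝕜 => (RCLike.re z, RCLike.im z)) := by
    intro a b h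
    exact RCLike.ext (congrArg Prod.fst h) (congrArg Prod.snd h)
  have hinjB : Function.Injective
      (fun z : (ℕ →ᵇ 𝕜) => (fun n => (RCLike.re (z n), RCLike.im (z n)) : ℕ → ℝ × ℝ)) := by
    intro a b h
    ext n
    have h1 := congrFun h n
    exact RCLike.ext (congrArg Prod.fst h1) (congrArg Prod.snd h1)
  haveI hsmu : Small.{u} (ℕ →ᵇ 𝕜) := small_of_injective hinjB
  haveI hsmv : Small.{v} (ℕ →ᵇ 𝕜) := small_of_injective hinjB
  haveI : Small.{u} ↥Y₀ := small_of_injective LL.injective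
  -- universe-u copy of Y₀
  letI instW1 : NormedAddCommGroup (Shrink.{u} ↥Y₀) :=
    inferInstance
  letI instW2 : NormedSpace 𝕜 (Shrink.{u} ↥Y₀) :=
    inferInstance
  let eW : Shrink.{u} ↥Y₀ ≃ₗᵢ[𝕜] ↥Y₀ :=
    { Shrink.linearEquiv 𝕜 ↥Y₀ with norm_map' := fun _ => rfl }
  haveI : CompleteSpace (Shrink.{u} ↥Y₀) := eW.toIsometryEquiv.completeSpace
  -- universe-v copy of ℕ →ᵇ 𝕜
  letI instZ1 : NormedAddCommGroup (Shrink.{v} (ℕ →ᵇ 𝕜)) :=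
    inferInstance
  letI instZ2 : NormedSpace 𝕜 (Shrink.{v} (ℕ →ᵇ 𝕜)) :=
    inferInstance
  let eZ : Shrink.{v} (ℕ →ᵇ 𝕜) ≃ₗᵢ[𝕜] (ℕ →ᵇ 𝕜) :=
    { Shrink.linearEquiv 𝕜 (ℕ →ᵇ 𝕜) with norm_map' := fun _ => rfl }
  haveI : CompleteSpace (Shrink.{v} (ℕ →ᵇ 𝕜)) := eZ.toIsometryEquiv.completeSpace
  -- apply the extension property
  let ii : Shrink.{u} ↥Y₀ →ₗᵢ[𝕜] Shrink.{v} (ℕ →ᵇ 𝕜) :=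
    (eZ.symm.toLinearIsometry.comp LL).comp eW.toLinearIsometry
  let Tw : Shrink.{u} ↥Y₀ →L[𝕜] Y :=
    Y₀.subtypeL.comp eW.toLinearIsometry.toContinuousLinearMap
  obtain ⟨r, hr1, hr2⟩ := hY _ _ ii Tw
  have hTw : ‖Tw‖ ≤ 1 := by
    refine Tw.opNorm_le_bound zero_le_one fun w => ?_
    rw [one_mul]
    calc ‖Tw w‖ = ‖((eW w : ↥Y₀) : Y)‖ := rfl
      _ = ‖eW w‖ := rfl
      _ = ‖w‖ := eW.norm_map w
      _ ≤ ‖w‖ := le_rfl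
  have hrn : ‖r‖ ≤ lam := by
    refine hr2.trans ?_
    calc lam * ‖Tw‖ ≤ lam * 1 := mul_le_mul_of_nonneg_left hTw hlam0
      _ = lam := mul_one lam
  let R : (ℕ →ᵇ 𝕜) →L[𝕜] Y := r.comp eZ.symm.toLinearIsometry.toContinuousLinearMap
  have hRL : ∀ y : ↥Y₀, R (LL y) = (y : Y) := by
    intro y
    have h1 : (eZ.symm (LL y) : Shrink.{v} (ℕ →ᵇ 𝕜)) = ii (eW.symm y) := by
      simp [ii]
    calc R (LL y) = r (eZ.symm (LL y)) := rfl
      _ = r (ii (eW.symm y)) := by rw [h1]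
      _ = Tw (eW.symm y) := hr1 _
      _ = (y : Y) := by simp [Tw]
  have hRn : ‖R‖ ≤ lam := by
    refine R.opNorm_le_bound hlam0 fun z => ?_
    calc ‖R z‖ = ‖r (eZ.symm z)‖ := rfl
      _ ≤ ‖r‖ * ‖eZ.symm z‖ := r.le_opNorm _
      _ = ‖r‖ * ‖z‖ := by rw [eZ.symm.norm_map]
      _ ≤ lam * ‖z‖ := mul_le_mul_of_nonneg_right hrn (norm_nonneg z)
  let T₀ : X →L[𝕜] ↥Y₀ := T.codRestrict Y₀ hmem
  have htb : TotallyBounded ((fun x => LL (T₀ x)) '' Metric.closedBall 0 1) := by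
    have h1 : TotallyBounded (T '' Metric.closedBall 0 1) :=
      TotallyBounded.subset subset_closure hK.totallyBounded
    have h2 : TotallyBounded (T₀ '' Metric.closedBall 0 1) := by
      rw [← totallyBounded_image_iff (isometry_subtype_coe (s := (Y₀ : Set Y))).isUniformInducing]
      rw [← Set.image_comp]
      exact h1
    have h3 := h2.image LL.isometry.uniformContinuous
    rwa [← Set.image_comp] at h3
  -- key approximation step
  have key : ∀ n : ℕ, ∃ F : X →L[𝕜] Y, FiniteDimensional 𝕜 (LinearMap.range (F : X →ₗ[𝕜] Y)) ∧
      ‖F - T‖ ≤ lam * (3 * (1 / (n + 1))) := by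
    intro n
    have hpos : (0 : ℝ) < 1 / (n + 1) := by positivity
    obtain ⟨P, hPfin, hPapp⟩ := bcf_finrank_approx htb hpos
    haveI := hPfin
    set F' : X →L[𝕜] Y := (R.comp P).comp (LL.toContinuousLinearMap.comp T₀) with hF'
    refine ⟨F', ?_, ?_⟩
    · have hle : LinearMap.range (F' : X →ₗ[𝕜] Y) ≤
          (LinearMap.range (P : (ℕ →ᵇ 𝕜) →ₗ[𝕜] (ℕ →ᵇ 𝕜))).map (R : (ℕ →ᵇ 𝕜) →ₗ[𝕜] Y) := by
        rintro _ ⟨x, rfl⟩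
        exact ⟨P (LL (T₀ x)), ⟨_, rfl⟩, rfl⟩
      exact Submodule.finiteDimensional_of_le hle
    · have hb : ∀ x ∈ Metric.closedBall (0 : X) 1,
          ‖F' x - T x‖ ≤ lam * (3 * (1 / (n + 1))) := by
        intro x hx
        have hz : LL (T₀ x) ∈ (fun x => LL (T₀ x)) '' Metric.closedBall 0 1 := ⟨x, hx, rfl⟩
        have h1 := hPapp _ hz
        have hTx : T x = R (LL (T₀ x)) := (hRL (T₀ x)).symm
        calc ‖F' x - T x‖ = ‖R (P (LL (T₀ x))) - R (LL (T₀ x))‖ := by rw [hTx]; rfl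
          _ = ‖R (P (LL (T₀ x)) - LL (T₀ x))‖ := by rw [map_sub]
          _ ≤ ‖R‖ * ‖P (LL (T₀ x)) - LL (T₀ x)‖ := R.le_opNorm _
          _ ≤ lam * (3 * (1 / (n + 1))) := mul_le_mul hRn h1 (norm_nonneg _) hlam0
      refine ContinuousLinearMap.opNorm_le_bound _ (by positivity) fun x => ?_
      rcases eq_or_ne x 0 with rfl | hx0
      · simp
      · set c : 𝕜 := ((‖x‖ : ℝ) : 𝕜)⁻¹ with hcdef
        have hnx : (0 : ℝ) < ‖x‖ := norm_pos_iff.2 hx0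
        have hcx : c • x ∈ Metric.closedBall (0 : X) 1 := by
          rw [Metric.mem_closedBall, dist_zero_right, norm_smul, hcdef, norm_inv,
            RCLike.norm_ofReal, abs_of_pos hnx, inv_mul_cancel₀ (ne_of_gt hnx)]
        have h2 := hb _ hcx
        have h4 : F' (c • x) - T (c • x) = c • (F' x - T x) := by
          rw [map_smul, map_smul, ← smul_sub]
        rw [h4, norm_smul, hcdef, norm_inv, RCLike.norm_ofReal, abs_of_pos hnx] at h2
        rw [ContinuousLinearMap.sub_apply]
        calc ‖F' x - T x‖ = ‖x‖ * (‖x‖⁻¹ * ‖F' x - T x‖) := by field_simp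
          _ ≤ ‖x‖ * (lam * (3 * (1 / (n + 1)))) := mul_le_mul_of_nonneg_left h2 (norm_nonneg x)
          _ = lam * (3 * (1 / (n + 1))) * ‖x‖ := by ring
  choose F hF1 hF2 using key
  refine ⟨F, hF1, ?_⟩
  rw [tendsto_iff_norm_sub_tendsto_zero]
  have hlim : Tendsto (fun n : ℕ => lam * (3 * (1 / (n + 1)))) atTop (nhds 0) := by
    have := tendsto_one_div_add_atTop_nhds_zero_nat.const_mul (lam * 3)
    simpa [mul_assoc] using this
  exact squeeze_zero (fun n => norm_nonneg _) hF2 hlim
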